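/- Let f : [0, ∞) → ℝ be a bounded function with f(0)=0 and define Y, Ŷ, and their running suprema as for the drawdown/rally processes of f. Fix a ≥ b > 0, let τ_a = inf{t : Y_t > a} and τ̂_b = inf{t : Ŷ_t > b}, and suppose τ̂_b < ∞ with Ŷ_{τ̂_b} = sup_{s ≤ τ̂_b} Ŷ_s = b. Then τ_a < τ̂_b if and only if Y_{τ̂_b} > a − b. -/

import Mathlib

open Real

theorem stmt8 (f : ℝ → ℝ)
    (hbdd : ∃ C : ℝ, ∀ s : ℝ, 0 ≤ s → |f s| ≤ C) (hf0 : f 0 = 0)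
    (Y Yh : ℝ → ℝ)
    (hY : ∀ t, Y t = sSup (f '' Set.Icc (0:ℝ) t) - f t)
    (hYh : ∀ t, Yh t = f t - sInf (f '' Set.Icc (0:ℝ) t))
    (a b : ℝ) (hb : 0 < b) (hab : b ≤ a)
    (taub : ℝ) (htaub : taub = sInf {t : ℝ | 0 ≤ t ∧ Yh t > b})
    (hne : {t : ℝ | 0 ≤ t ∧ Yh t > b}.Nonempty)
    (h1 : Yh taub = b)
    (h2 : sSup (Yh '' Set.Icc (0:ℝ) taub) = b) :
    (⨅ t ∈ {t : ℝ | 0 ≤ t ∧ Y t > a}, ENNReal.ofReal t) < ENNReal.ofReal taub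
      ↔ Y taub > a - b := by
  obtain ⟨C, hC⟩ := hbdd
  have hIcc_ne : ∀ t : ℝ, 0 ≤ t → (f '' Set.Icc (0:ℝ) t).Nonempty :=
    fun t ht => ⟨f 0, ⟨0, ⟨le_refl 0, ht⟩, rfl⟩⟩
  have hbdda : ∀ t : ℝ, BddAbove (f '' Set.Icc (0:ℝ) t) := by
    intro t
    refine ⟨C, ?_⟩
    rintro x ⟨s, hs, rfl⟩
    exact (abs_le.1 (hC s hs.1)).2
  have hbddb : ∀ t : ℝ, BddBelow (f '' Set.Icc (0:ℝ) t) := by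
    intro t
    refine ⟨-C, ?_⟩
    rintro x ⟨s, hs, rfl⟩
    exact (abs_le.1 (hC s hs.1)).1
  have htaub0 : 0 ≤ taub := htaub ▸ le_csInf hne (fun t ht => ht.1)
  have hYh0 : Yh 0 = 0 := by
    rw [hYh 0]
    simp [Set.Icc_self, hf0]
  have htaubpos : 0 < taub := by
    rcases lt_or_eq_of_le htaub0 with h | h
    · exact h
    · exfalso
      rw [← h, hYh0] at h1
      linarith
  have hYhle : ∀ s, 0 ≤ s → s ≤ taub → Yh s ≤ b := by
    intro s hs hst
    rw [← h2]
    apply le_csSup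
    · refine ⟨C + C, ?_⟩
      rintro x ⟨u, hu, rfl⟩
      rw [hYh u]
      have ha1 := (abs_le.1 (hC u hu.1)).2
      have ha2 : (-C : ℝ) ≤ sInf (f '' Set.Icc (0:ℝ) u) :=
        le_csInf (hIcc_ne u hu.1) (by rintro x ⟨v, hv, rfl⟩; exact (abs_le.1 (hC v hv.1)).1)
      linarith
    · exact ⟨s, ⟨hs, hst⟩, rfl⟩
  set M := sSup (f '' Set.Icc (0:ℝ) taub) with hM
  set m := sInf (f '' Set.Icc (0:ℝ) taub) with hm
  have hftaub : f taub = b + m := by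
    have := hYh taub
    rw [h1] at this
    linarith [this]
  have key : ((⨅ t ∈ {t : ℝ | 0 ≤ t ∧ Y t > a}, ENNReal.ofReal t) < ENNReal.ofReal taub)
      ↔ ∃ t, (0 ≤ t ∧ Y t > a) ∧ t < taub := by
    rw [iInf_lt_iff]
    constructor
    · rintro ⟨t, ht⟩
      rw [iInf_lt_iff] at ht
      obtain ⟨h, hlt⟩ := ht
      exact ⟨t, h, (ENNReal.ofReal_lt_ofReal_iff htaubpos).1 hlt⟩
    · rintro ⟨t, h, hlt⟩
      exact ⟨t, iInf_lt_iff.2 ⟨h, (ENNReal.ofReal_lt_ofReal_iff htaubpos).2 hlt⟩⟩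
  rw [key]
  constructor
  · rintro ⟨t, ⟨ht0, hYt⟩, htlt⟩
    rw [hY t] at hYt
    rw [hY taub, hftaub]
    have hsub : sSup (f '' Set.Icc (0:ℝ) t) ≤ M :=
      csSup_le_csSup (hbdda taub) (hIcc_ne t ht0)
        (Set.image_mono (f := f) (Set.Icc_subset_Icc_right (le_of_lt htlt)))
    have hmt : m ≤ f t := by
      have : m ≤ sInf (f '' Set.Icc (0:ℝ) t) :=
        csInf_le_csInf (hbddb taub) (hIcc_ne t ht0)
          (Set.image_mono (f := f) (Set.Icc_subset_Icc_right (le_of_lt htlt)))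
      have h2 : sInf (f '' Set.Icc (0:ℝ) t) ≤ f t :=
        csInf_le (hbddb t) ⟨t, ⟨ht0, le_refl t⟩, rfl⟩
      linarith
    linarith
  · intro hYtaub
    rw [hY taub, hftaub] at hYtaub
    have hMm : M - m > a := by linarith
    set ε : ℝ := min (b / 2) ((M - m - a) / 2) with hε
    have hεpos : 0 < ε := lt_min (by linarith) (by linarith)
    have hεb : ε ≤ b / 2 := min_le_left _ _
    have hεa : ε ≤ (M - m - a) / 2 := min_le_right _ _
    obtain ⟨x, ⟨s, hs, rfl⟩, hxs⟩ :=
      exists_lt_of_lt_csSup (hIcc_ne taub htaub0) (show M - ε < M by linarith)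
    obtain ⟨y, ⟨u, hu, rfl⟩, hyu⟩ :=
      exists_lt_of_csInf_lt (hIcc_ne taub htaub0) (show m < m + ε by linarith)
    have hfsu : f s - f u > a := by linarith
    have hsu : s < u := by
      by_contra hle
      push_neg at hle
      have : Yh s ≤ b := hYhle s hs.1 hs.2
      rw [hYh s] at this
      have : sInf (f '' Set.Icc (0:ℝ) s) ≤ f u :=
        csInf_le (hbddb s) ⟨u, ⟨hu.1, hle⟩, rfl⟩
      linarith [hYhle s hs.1 hs.2, (hYh s), this]
    have hYu : Y u > a := by
      rw [hY u]
      have : f s ≤ sSup (f '' Set.Icc (0:ℝ) u) :=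
        le_csSup (hbdda u) ⟨s, ⟨hs.1, le_of_lt hsu⟩, rfl⟩
      linarith
    have hutaub : u < taub := by
      rcases lt_or_eq_of_le hu.2 with h | h
      · exact h
      · exfalso
        rw [h] at hyu
        rw [hftaub] at hyu
        linarith
    exact ⟨u, ⟨hu.1, hYu⟩, hutaub⟩
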